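/- Let $k$ be a local field, $q$ a non-degenerate quadratic form in $n$ variables over $k$, $\alpha\in k$ a root of $p(t)$ of even order $r$ with $p(t)=(t-\alpha)^r p_0(t)$, $p_0(\alpha)\neq 0$. If the form $q(x_1,\dots,x_n) - p_0(\alpha)x_{n+1}^2$ is isotropic over $k$, then $(0,\dots,0,\alpha)$ is a limit of smooth $k$-points of the hypersurface $q(x)=p(t)$. -/

import Mathlib

section aux

variable {k : Type*} [Field k]

/-- Symmetry of the bilinear form attached to a symmetric matrix. -/
lemma stmt15.dot_symm {n : ℕ} (M : Matrix (Fin n) (Fin n) k) (hsymm : M.IsSymm)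
    (a b : Fin n → k) :
    dotProduct a (M.mulVec b) = dotProduct b (M.mulVec a) := by
  rw [Matrix.dotProduct_mulVec, ← Matrix.mulVec_transpose, hsymm.eq, dotProduct_comm]

/-- A nondegenerate isotropic quadratic form (together with the hypothesis) represents
`p₀(α)`. -/
lemma stmt15.exists_rep {n : ℕ} [CharZero k] (M : Matrix (Fin n) (Fin n) k)
    (hsymm : M.IsSymm) (hdet : M.det ≠ 0) (d : k)
    (hiso : ∃ (x : Fin n → k) (s : k), ¬ (x = 0 ∧ s = 0) ∧
      dotProduct x (M.mulVec x) - d * s ^ 2 = 0) :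
    ∃ y : Fin n → k, dotProduct y (M.mulVec y) = d := by
  obtain ⟨x, s, hxs, heq⟩ := hiso
  by_cases hs : s = 0
  · have hx : x ≠ 0 := fun h => hxs ⟨h, hs⟩
    have hqx : dotProduct x (M.mulVec x) = 0 := by
      have := heq; rw [hs] at this; simpa using this
    have hMx : M.mulVec x ≠ 0 := by
      intro h
      apply hx
      have hinj : Function.Injective M.mulVec :=
        Matrix.mulVec_injective_iff_isUnit.mpr
          ((Matrix.isUnit_iff_isUnit_det M).mpr (isUnit_iff_ne_zero.mpr hdet))
      have : M.mulVec x = M.mulVec 0 := by simpa using h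
      exact hinj this
    obtain ⟨j, hj⟩ := Function.ne_iff.mp hMx
    have hj' : M.mulVec x j ≠ 0 := by simpa using hj
    set b : k := M.mulVec x j with hb
    set w : Fin n → k := Pi.single j 1 with hw
    have hwMx : dotProduct w (M.mulVec x) = b := by
      simp [hw, hb, dotProduct, Pi.single_apply]
    have hxMw : dotProduct x (M.mulVec w) = b :=
      (stmt15.dot_symm M hsymm x w).trans hwMx
    set qw : k := dotProduct w (M.mulVec w) with hqw
    set c : k := (d - qw) / (2 * b) with hc
    refine ⟨c • x + w, ?_⟩
    have expand : dotProduct (c • x + w) (M.mulVec (c • x + w)) =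
        c ^ 2 * dotProduct x (M.mulVec x) +
          c * dotProduct x (M.mulVec w) +
          c * dotProduct w (M.mulVec x) + qw := by
      simp [Matrix.mulVec_add, Matrix.mulVec_smul, add_dotProduct,
        dotProduct_add, smul_dotProduct, dotProduct_smul,
        smul_eq_mul]
      ring
    rw [expand, hqx, hxMw, hwMx, hc]
    have h2b : (2 : k) * b ≠ 0 := mul_ne_zero two_ne_zero hj'
    field_simp
    ring
  · refine ⟨s⁻¹ • x, ?_⟩
    have hq : dotProduct x (M.mulVec x) = d * s ^ 2 := sub_eq_zero.mp heq
    have hsm : dotProduct (s⁻¹ • x) (M.mulVec (s⁻¹ • x)) =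
        s⁻¹ * (s⁻¹ * dotProduct x (M.mulVec x)) := by
      simp [Matrix.mulVec_smul, smul_dotProduct, dotProduct_smul,
        smul_eq_mul]
    rw [hsm, hq, show s⁻¹ * (s⁻¹ * (d * s ^ 2)) = d * (s⁻¹ * s) ^ 2 by ring,
      inv_mul_cancel₀ hs]
    simp

/-- In a complete nontrivially normed field of characteristic zero, every element
sufficiently close to `1` is a square (with square root close to `1`). -/
lemma stmt15.sq_mem_nhds {k : Type*} [NontriviallyNormedField k] [CompleteSpace k]
    [CharZero k] :
    {c : k | ∃ v : k, v ^ 2 = c ∧ ‖v - 1‖ < 1} ∈ nhds (1 : k) := by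
  have hd : HasStrictDerivAt (fun v : k => v ^ 2) (2 : k) 1 := by
    simpa using hasStrictDerivAt_pow 2 (1 : k)
  have hmap := hd.map_nhds_eq (two_ne_zero)
  have himg : (fun v : k => v ^ 2) '' Metric.ball 1 1 ∈
      Filter.map (fun v : k => v ^ 2) (nhds (1 : k)) :=
    Filter.image_mem_map (Metric.ball_mem_nhds _ one_pos)
  rw [hmap] at himg
  simp only [one_pow] at himg
  refine Filter.mem_of_superset himg ?_
  rintro c ⟨v, hv, rfl⟩
  exact ⟨v, rfl, by simpa [dist_eq_norm] using hv⟩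

end aux

/-- `k` a local field, `q` a non-degenerate quadratic form over `k`
(Gram matrix `M`), `p ∈ k[t]` nonzero, `α ∈ k` a root of `p` of even order `r`,
with `p = (t-α)^r p₀`, `p₀(α) ≠ 0`.  If the `(n+1)`-variable quadratic form
`q(x₁,…,xₙ) - p₀(α) x_{n+1}²` is isotropic over `k`, then the singular point
`(0,…,0,α)` is a limit of smooth `k`-points of the hypersurface `q(x) = p(t)`. -/
theorem stmt15 (k : Type*) [NontriviallyNormedField k] [CompleteSpace k]
    [LocallyCompactSpace k] [CharZero k]
    (n : ℕ) (hn : 1 ≤ n)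
    (M : Matrix (Fin n) (Fin n) k) (hsymm : M.IsSymm) (hdet : M.det ≠ 0)
    (p p₀ : Polynomial k) (hp : p ≠ 0)
    (α : k) (r : ℕ) (hreven : Even r) (hrpos : 0 < r)
    (hfact : p = (Polynomial.X - Polynomial.C α) ^ r * p₀)
    (hp₀ : p₀.eval α ≠ 0)
    (hiso : ∃ (x : Fin n → k) (s : k), ¬ (x = 0 ∧ s = 0) ∧
      dotProduct x (M.mulVec x) - p₀.eval α * s ^ 2 = 0) :
    ((0, α) : (Fin n → k) × k) ∈
      closure {P : (Fin n → k) × k |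
        dotProduct P.1 (M.mulVec P.1) = p.eval P.2 ∧
        ¬ (M.mulVec P.1 = 0 ∧ p.derivative.eval P.2 = 0)} := by
  classical
  obtain ⟨m, hm⟩ := hreven
  have hm0 : m ≠ 0 := by rintro rfl; simp at hm; omega
  obtain ⟨y, hy⟩ := stmt15.exists_rep M hsymm hdet (p₀.eval α) hiso
  -- square root function near 1
  set u : k → k := fun t =>
    if h : ∃ v : k, v ^ 2 = p₀.eval t / p₀.eval α ∧ ‖v - 1‖ < 1 then h.choose else 1
    with hu_def
  have hubound : ∀ t, ‖u t‖ ≤ 2 := by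
    intro t
    by_cases h : ∃ v : k, v ^ 2 = p₀.eval t / p₀.eval α ∧ ‖v - 1‖ < 1
    · rw [hu_def]; simp only [dif_pos h]
      have h2 := h.choose_spec.2
      calc ‖h.choose‖ = ‖h.choose - 1 + 1‖ := by rw [sub_add_cancel]
        _ ≤ ‖h.choose - 1‖ + ‖(1 : k)‖ := norm_add_le _ _
        _ ≤ 1 + 1 := by rw [norm_one]; linarith
        _ = 2 := by norm_num
    · rw [hu_def]; simp only [dif_neg h, norm_one]; norm_num
  -- auxiliary polynomial factor in the derivative
  set g : k → k := fun t => (r : k) * p₀.eval t + (t - α) * p₀.derivative.eval t with hg_def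
  have hgα : g α ≠ 0 := by
    have : g α = (r : k) * p₀.eval α := by simp [hg_def]
    rw [this]
    exact mul_ne_zero (Nat.cast_ne_zero.mpr hrpos.ne') hp₀
  have hgcont : Continuous g := by
    apply Continuous.add
    · exact continuous_const.mul (Polynomial.continuous p₀)
    · exact (continuous_id.sub continuous_const).mul (Polynomial.continuous p₀.derivative)
  have hderiv : ∀ t : k, p.derivative.eval t = (t - α) ^ (r - 1) * g t := by
    intro t
    obtain ⟨r', rfl⟩ : ∃ r', r = r' + 1 := ⟨r - 1, (Nat.succ_pred_eq_of_pos hrpos).symm⟩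
    rw [hfact, Polynomial.derivative_mul, Polynomial.derivative_pow,
      Polynomial.derivative_X_sub_C, mul_one]
    simp only [Polynomial.eval_add, Polynomial.eval_mul, Polynomial.eval_pow,
      Polynomial.eval_sub, Polynomial.eval_X, Polynomial.eval_C, Polynomial.eval_natCast,
      Nat.add_sub_cancel, hg_def]
    push_cast
    ring
  -- the eventual facts along the punctured neighborhood
  have hφ : ContinuousAt (fun t : k => p₀.eval t / p₀.eval α) α :=
    ((Polynomial.continuous p₀).div_const _).continuousAt
  have hev1 : ∀ᶠ t in nhdsWithin α {α}ᶜ,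
      ∃ v : k, v ^ 2 = p₀.eval t / p₀.eval α ∧ ‖v - 1‖ < 1 := by
    apply Filter.Eventually.filter_mono nhdsWithin_le_nhds
    have := hφ.preimage_mem_nhds (by rw [div_self hp₀]; exact stmt15.sq_mem_nhds)
    filter_upwards [this] with t ht using ht
  have hev2 : ∀ᶠ t in nhdsWithin α {α}ᶜ, g t ≠ 0 := by
    apply Filter.Eventually.filter_mono nhdsWithin_le_nhds
    exact hgcont.continuousAt.eventually_ne hgα
  -- the approximating points
  set F : k → (Fin n → k) × k := fun t => (((t - α) ^ m * u t) • y, t) with hF_def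
  have htend : Filter.Tendsto F (nhdsWithin α {α}ᶜ) (nhds ((0, α) : (Fin n → k) × k)) := by
    apply Filter.Tendsto.prodMk_nhds
    · have hc : Filter.Tendsto (fun t : k => (t - α) ^ m * u t)
          (nhdsWithin α {α}ᶜ) (nhds 0) := by
        apply squeeze_zero_norm (a := fun t : k => ‖t - α‖ ^ m * 2)
        · intro t
          rw [norm_mul, norm_pow]
          exact mul_le_mul_of_nonneg_left (hubound t) (by positivity)
        · have h1 : Filter.Tendsto (fun t : k => ‖t - α‖ ^ m * 2)
              (nhds α) (nhds (‖α - α‖ ^ m * 2)) := by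
            exact ((((continuous_id.sub continuous_const).norm).pow m).mul
              continuous_const).continuousAt
          have h2 : ‖α - α‖ ^ m * 2 = 0 := by simp [zero_pow hm0]
          rw [h2] at h1
          exact h1.mono_left nhdsWithin_le_nhds
      simpa using hc.smul_const y
    · exact Filter.tendsto_id.mono_left nhdsWithin_le_nhds
  apply mem_closure_of_tendsto htend
  filter_upwards [hev1, hev2, self_mem_nhdsWithin] with t hex hgt htne
  have htα : t - α ≠ 0 := sub_ne_zero.mpr htne
  have hv : (u t) ^ 2 = p₀.eval t / p₀.eval α ∧ ‖u t - 1‖ < 1 := by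
    rw [hu_def]; simp only [dif_pos hex]; exact hex.choose_spec
  constructor
  · have hq : dotProduct (((t - α) ^ m * u t) • y)
        (M.mulVec (((t - α) ^ m * u t) • y)) =
        ((t - α) ^ m * u t) ^ 2 * p₀.eval α := by
      simp [Matrix.mulVec_smul, smul_dotProduct, dotProduct_smul,
        smul_eq_mul, hy]
      ring
    have hc2 : ((t - α) ^ m * u t) ^ 2 * p₀.eval α = (t - α) ^ r * p₀.eval t := by
      rw [mul_pow, ← pow_mul]
      rw [hv.1]
      have : m * 2 = r := by omega
      rw [this]
      field_simp
    show dotProduct (F t).1 (M.mulVec (F t).1) = p.eval (F t).2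
    rw [hF_def]
    simp only
    rw [hq, hc2, hfact]
    simp
  · rintro ⟨-, h2⟩
    rw [hderiv t] at h2
    exact (mul_ne_zero (pow_ne_zero _ htα) hgt) h2
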